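/- The exponential generating function of the r-derangement numbers is sum_{k=0}^∞ d_{k,r} t^k / k! = t^r e^{-t} / (1-t)^{r+1}, as an identity of formal power series over ℚ. -/

import Mathlib

open Equiv Equiv.Perm

namespace RDerAux



variable {α β : Type*}

/-- conjugation as a monoid hom -/
def permCongrHom (e : β ≃ α) : Perm β →* Perm α where
  toFun f := e.permCongr f
  map_one' := by ext x; simp
  map_mul' f g := by ext x; simp

lemma permCongr_zpow (e : β ≃ α) (f : Perm β) (n : ℤ) :
    (e.permCongr f) ^ n = e.permCongr (f ^ n) :=
  (map_zpow (permCongrHom e) f n).symm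

lemma sameCycle_permCongr (e : β ≃ α) (f : Perm β) (x y : α) :
    (e.permCongr f).SameCycle x y ↔ f.SameCycle (e.symm x) (e.symm y) := by
  constructor
  · rintro ⟨n, h⟩
    refine ⟨n, ?_⟩
    rw [permCongr_zpow, permCongr_apply] at h
    rw [← h]; simp
  · rintro ⟨n, h⟩
    refine ⟨n, ?_⟩
    rw [permCongr_zpow, permCongr_apply, h]; simp




variable {β : Type*} [DecidableEq β]

/-- insert `none` into the cycle of `b0`, right after `b0`. -/
def fB (τ : Perm β) (b0 : β) : Perm (Option β) :=
  Equiv.swap none (some (τ b0)) * Equiv.optionCongr τ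

lemma fB_none (τ : Perm β) (b0 : β) : fB τ b0 none = some (τ b0) := by
  simp [fB]

lemma fB_some_self (τ : Perm β) (b0 : β) : fB τ b0 (some b0) = none := by
  simp [fB]

lemma fB_some (τ : Perm β) (b0 : β) {i : β} (h : i ≠ b0) :
    fB τ b0 (some i) = some (τ i) := by
  simp only [fB, Perm.mul_apply, optionCongr_apply, Option.map_some]
  exact Equiv.swap_apply_of_ne_of_ne (by simp) (by simp [τ.injective.ne h])

lemma fB_orbit (τ : Perm β) (b0 : β) : ∀ (n : ℕ) (i : β),
    ((fB τ b0 ^ n) (some i) = none → τ.SameCycle i b0) ∧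
    (∀ j, (fB τ b0 ^ n) (some i) = some j → τ.SameCycle i j) := by
  intro n
  induction n with
  | zero =>
    intro i
    refine ⟨by simp, fun j h => ?_⟩
    simp only [pow_zero, Perm.one_apply, Option.some.injEq] at h
    exact h ▸ SameCycle.refl _ _
  | succ n ih =>
    intro i
    have hpow : (fB τ b0 ^ (n+1)) (some i) = fB τ b0 ((fB τ b0 ^ n) (some i)) := by
      rw [pow_succ', Perm.mul_apply]
    rcases h' : (fB τ b0 ^ n) (some i) with _ | x
    · have hc : τ.SameCycle i b0 := (ih i).1 h'
      rw [h', fB_none] at hpow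
      constructor
      · intro h; rw [hpow] at h; exact absurd h (by simp)
      · intro j h
        rw [hpow] at h
        simp only [Option.some.injEq] at h
        exact h ▸ hc.trans ⟨1, by simp⟩
    · have hc : τ.SameCycle i x := (ih i).2 x h'
      rw [h'] at hpow
      by_cases hx : x = b0
      · subst hx
        rw [fB_some_self] at hpow
        exact ⟨fun _ => hc, fun j h => absurd (hpow ▸ h) (by simp)⟩
      · rw [fB_some τ b0 hx] at hpow
        refine ⟨fun h => absurd (hpow ▸ h) (by simp), fun j h => ?_⟩
        rw [hpow] at h
        simp only [Option.some.injEq] at h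
        exact h ▸ hc.trans ⟨1, by simp⟩

lemma fB_step [Fintype β] (τ : Perm β) (b0 : β) (x : β) :
    (fB τ b0).SameCycle (some x) (some (τ x)) := by
  by_cases hx : x = b0
  · subst hx
    refine ⟨2, ?_⟩
    have h2 : ((fB τ x) ^ (2:ℤ)) = (fB τ x) ^ (2:ℕ) := by norm_cast
    rw [h2, pow_two, Perm.mul_apply, fB_some_self, fB_none]
  · refine ⟨1, ?_⟩
    simpa using fB_some τ b0 hx

lemma sameCycle_fB [Fintype β] (τ : Perm β) (b0 : β) (i j : β) :
    (fB τ b0).SameCycle (some i) (some j) ↔ τ.SameCycle i j := by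
  constructor
  · intro h
    obtain ⟨n, -, -, h⟩ := h.exists_pow_eq''
    exact (fB_orbit τ b0 n i).2 j h
  · intro h
    obtain ⟨n, -, -, h⟩ := h.exists_pow_eq''
    subst h
    induction n with
    | zero => exact ⟨0, by simp⟩
    | succ n ih =>
      rw [pow_succ', Perm.mul_apply]
      exact (ih ⟨(n:ℤ), by simp [zpow_natCast]⟩).trans (fB_step τ b0 _)




variable {β : Type*} [DecidableEq β]

/-- a 2-cycle on `none, some none` together with `τ` on the doubly-`some` elements. -/
def fC (τ : Perm β) : Perm (Option (Option β)) :=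
  Equiv.swap none (some none) * Equiv.optionCongr (Equiv.optionCongr τ)

lemma fC_none (τ : Perm β) : fC τ none = some none := by simp [fC]

lemma fC_some_none (τ : Perm β) : fC τ (some none) = none := by simp [fC]

lemma fC_ss (τ : Perm β) (i : β) : fC τ (some (some i)) = some (some (τ i)) := by
  simp only [fC, Perm.mul_apply, optionCongr_apply, Option.map_some]
  exact Equiv.swap_apply_of_ne_of_ne (by simp) (by simp)

lemma fC_pow_ss (τ : Perm β) (n : ℕ) (i : β) :
    (fC τ ^ n) (some (some i)) = some (some ((τ ^ n) i)) := by
  induction n generalizing i with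
  | zero => simp
  | succ n ih => rw [pow_succ, Perm.mul_apply, pow_succ, Perm.mul_apply, fC_ss, ih]

lemma fC_pow_some_none (τ : Perm β) (n : ℕ) :
    (fC τ ^ n) (some none) = some none ∨ (fC τ ^ n) (some none) = none := by
  induction n with
  | zero => simp
  | succ n ih =>
    rw [pow_succ', Perm.mul_apply]
    rcases ih with h | h <;> rw [h]
    · exact Or.inr (fC_some_none τ)
    · exact Or.inl (fC_none τ)

lemma sameCycle_fC [Fintype β] (τ : Perm β) (i j : β) :
    (fC τ).SameCycle (some (some i)) (some (some j)) ↔ τ.SameCycle i j := by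
  constructor
  · intro h
    obtain ⟨n, -, -, h⟩ := h.exists_pow_eq''
    rw [fC_pow_ss] at h
    simp only [Option.some.injEq] at h
    exact ⟨n, by simpa [zpow_natCast] using h⟩
  · intro h
    obtain ⟨n, -, -, h⟩ := h.exists_pow_eq''
    exact ⟨n, by simpa [zpow_natCast, fC_pow_ss] using congrArg (some ∘ some) h⟩

lemma not_sameCycle_fC [Fintype β] (τ : Perm β) (i : β) :
    ¬ (fC τ).SameCycle (some none) (some (some i)) := by
  intro h
  obtain ⟨n, -, -, h⟩ := h.exists_pow_eq''
  rcases fC_pow_some_none τ n with h' | h' <;> rw [h'] at h <;> simp at h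


section FinLemmas

lemma val_succAbove_lt_iff {n : ℕ} (a : Fin (n+1)) (i : Fin n) (c : ℕ) (hc : c ≤ (a:ℕ)) :
    ((a.succAbove i : Fin (n+1)) : ℕ) < c ↔ (i:ℕ) < c := by
  rcases lt_or_ge (Fin.castSucc i) a with h | h
  · rw [Fin.succAbove_of_castSucc_lt _ _ h]
    simp
  · rw [Fin.succAbove_of_le_castSucc _ _ h]
    have h' : (a:ℕ) ≤ (i:ℕ) := by
      simpa [Fin.le_def] using h
    simp [Fin.val_succ]
    omega

lemma succAbove_of_val_lt {n : ℕ} (a : Fin (n+1)) (i : Fin n) (h : (i:ℕ) < (a:ℕ)) :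
    a.succAbove i = ⟨i, i.2.trans (Nat.lt_succ_self n)⟩ := by
  rw [Fin.succAbove_of_castSucc_lt _ _ (by simpa [Fin.lt_def] using h)]
  rfl

end FinLemmas

/-- the defining condition of `condSet`. -/
def Cond (n r : ℕ) (σ : Perm (Fin n)) : Prop :=
  (∀ i, σ i ≠ i) ∧
    ∀ i j : Fin n, (i : ℕ) < r → (j : ℕ) < r → i ≠ j → ¬ σ.SameCycle i j

/-- the set of permutations counted by `rDerangements`. -/
abbrev condSet (n r : ℕ) : Type :=
  {σ : Perm (Fin n) // Cond n r σ}

lemma condSet_card_cast {n n' : ℕ} (r : ℕ) (h : n = n') :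
    Nat.card (condSet n r) = Nat.card (condSet n' r) := by subst h; rfl

section Main

variable (r k : ℕ)

/-- the distinguished marked element in the smaller type -/
def mB : Fin (k+r+1) := ⟨r, by omega⟩

/-- the distinguished marked element -/
def mA : Fin (k+r+2) := ⟨r, by omega⟩

/-- the case-B permutation built from `a` and `τ` -/
def σB (a : Fin (k+r+2)) (τ : Perm (Fin (k+r+1))) : Perm (Fin (k+r+2)) :=
  ((finSuccEquiv' a).symm).permCongr (fB τ (mB r k))

/-- the removal-of-two equivalence -/
def eE (a : Fin (k+r+2)) : Fin (k+r+2) ≃ Option (Option (Fin (k+r))) :=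
  (finSuccEquiv' a).trans (Equiv.optionCongr (finSuccEquiv' (mB r k)))

/-- the case-C permutation built from `a` and `τ'` -/
def σC (a : Fin (k+r+2)) (τ' : Perm (Fin (k+r))) : Perm (Fin (k+r+2)) :=
  (eE r k a).symm.permCongr (fC τ')

variable {r k}

lemma σB_apply (a : Fin (k+r+2)) (τ : Perm (Fin (k+r+1))) (x : Fin (k+r+2)) :
    σB r k a τ x = (finSuccEquiv' a).symm (fB τ (mB r k) (finSuccEquiv' a x)) := by
  simp [σB, Equiv.permCongr_apply]

lemma σC_apply (a : Fin (k+r+2)) (τ' : Perm (Fin (k+r))) (x : Fin (k+r+2)) :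
    σC r k a τ' x = (eE r k a).symm (fC τ' (eE r k a x)) := by
  simp [σC, Equiv.permCongr_apply]

lemma eE_symm_none (a : Fin (k+r+2)) : (eE r k a).symm none = a := by
  simp [eE, ← Equiv.optionCongr_symm, finSuccEquiv'_symm_none]

lemma eE_symm_some_none (a : Fin (k+r+2)) :
    (eE r k a).symm (some none) = a.succAbove (mB r k) := by
  simp [eE, ← Equiv.optionCongr_symm, finSuccEquiv'_symm_none, finSuccEquiv'_symm_some]

lemma eE_symm_ss (a : Fin (k+r+2)) (i : Fin (k+r)) :
    (eE r k a).symm (some (some i)) = a.succAbove ((mB r k).succAbove i) := by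
  simp [eE, ← Equiv.optionCongr_symm, finSuccEquiv'_symm_some]

lemma succAbove_mB {a : Fin (k+r+2)} (ha : r + 1 ≤ (a:ℕ)) :
    a.succAbove (mB r k) = mA r k := by
  rw [succAbove_of_val_lt a (mB r k) (by simp [mB]; omega)]
  rfl

lemma marked_classify {a : Fin (k+r+2)} (ha : r + 1 ≤ (a:ℕ)) {x : Fin (k+r+2)}
    (hx : (x:ℕ) < r + 1) :
    ∃ i : Fin (k+r+1), (i:ℕ) < r + 1 ∧ a.succAbove i = x := by
  have hxa : x ≠ a := by intro h; subst h; omega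
  obtain ⟨i, hi⟩ := Fin.exists_succAbove_eq hxa
  exact ⟨i, by rw [← val_succAbove_lt_iff a i (r+1) ha, hi]; exact hx, hi⟩

end Main

section Membership

variable {r k : ℕ}

lemma finSuccEquiv'_succAbove (a : Fin (k+r+2)) (i : Fin (k+r+1)) :
    finSuccEquiv' a (a.succAbove i) = some i := by
  rw [← finSuccEquiv'_symm_some, Equiv.apply_symm_apply]

lemma finSuccEquiv'_self (a : Fin (k+r+2)) : finSuccEquiv' a a = none :=
  (Equiv.apply_eq_iff_eq_symm_apply _).2 (finSuccEquiv'_symm_none a).symm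

lemma sameCycle_σB (a : Fin (k+r+2)) (τ : Perm (Fin (k+r+1))) (i j : Fin (k+r+1)) :
    (σB r k a τ).SameCycle (a.succAbove i) (a.succAbove j) ↔ τ.SameCycle i j := by
  rw [σB, sameCycle_permCongr]
  simp only [Equiv.symm_symm, finSuccEquiv'_succAbove]
  exact sameCycle_fB τ (mB r k) i j

lemma σB_fixed_iff (a : Fin (k+r+2)) (τ : Perm (Fin (k+r+1))) (x : Fin (k+r+2)) :
    σB r k a τ x = x ↔ fB τ (mB r k) (finSuccEquiv' a x) = finSuccEquiv' a x := by
  rw [σB_apply, Equiv.symm_apply_eq]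

lemma eE_apply_ss (a : Fin (k+r+2)) (i : Fin (k+r)) :
    eE r k a (a.succAbove ((mB r k).succAbove i)) = some (some i) := by
  rw [← eE_symm_ss, Equiv.apply_symm_apply]

lemma eE_apply_mA {a : Fin (k+r+2)} (ha : r + 1 ≤ (a:ℕ)) :
    eE r k a (mA r k) = some none := by
  rw [← succAbove_mB ha, ← eE_symm_some_none, Equiv.apply_symm_apply]

lemma eE_apply_self (a : Fin (k+r+2)) : eE r k a a = none :=
  (Equiv.apply_eq_iff_eq_symm_apply _).2 (eE_symm_none a).symm

lemma sameCycle_σC (a : Fin (k+r+2)) (τ' : Perm (Fin (k+r))) (i j : Fin (k+r)) :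
    (σC r k a τ').SameCycle (a.succAbove ((mB r k).succAbove i))
      (a.succAbove ((mB r k).succAbove j)) ↔ τ'.SameCycle i j := by
  rw [σC, sameCycle_permCongr]
  simp only [Equiv.symm_symm, eE_apply_ss]
  exact sameCycle_fC τ' i j

lemma not_sameCycle_σC {a : Fin (k+r+2)} (ha : r + 1 ≤ (a:ℕ)) (τ' : Perm (Fin (k+r)))
    (i : Fin (k+r)) :
    ¬ (σC r k a τ').SameCycle (mA r k) (a.succAbove ((mB r k).succAbove i)) := by
  rw [σC, sameCycle_permCongr]
  simp only [Equiv.symm_symm, eE_apply_ss, eE_apply_mA ha]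
  exact not_sameCycle_fC τ' i

lemma σC_fixed_iff (a : Fin (k+r+2)) (τ' : Perm (Fin (k+r))) (x : Fin (k+r+2)) :
    σC r k a τ' x = x ↔ fC τ' (eE r k a x) = eE r k a x := by
  rw [σC_apply, Equiv.symm_apply_eq]

lemma marked_classify_C {a : Fin (k+r+2)} (ha : r + 1 ≤ (a:ℕ)) {x : Fin (k+r+2)}
    (hx : (x:ℕ) < r + 1) :
    x = mA r k ∨ ∃ i : Fin (k+r), (i:ℕ) < r ∧ a.succAbove ((mB r k).succAbove i) = x := by
  obtain ⟨w, hw, hwx⟩ := marked_classify ha hx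
  by_cases hwm : w = mB r k
  · left; rw [← hwx, hwm, succAbove_mB ha]
  · right
    obtain ⟨i, hi⟩ := Fin.exists_succAbove_eq hwm
    refine ⟨i, ?_, by rw [hi, hwx]⟩
    have hmB : ((mB r k : Fin (k+r+1)) : ℕ) = r := rfl
    have hwr : (w:ℕ) < r := by
      rcases Nat.lt_or_ge (w:ℕ) r with h | h
      · exact h
      · exfalso; exact hwm (Fin.ext (by omega))
    rw [← val_succAbove_lt_iff (mB r k) i r (le_of_eq hmB.symm), hi]
    exact hwr

lemma memB_of {a : Fin (k+r+2)} (ha : r + 1 ≤ (a:ℕ)) {τ : Perm (Fin (k+r+1))}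
    (hτ : Cond (k+r+1) (r+1) τ) : Cond (k+r+2) (r+1) (σB r k a τ) := by
  constructor
  · intro x hx
    rw [σB_fixed_iff] at hx
    rcases h : finSuccEquiv' a x with _ | i
    · rw [h, fB_none] at hx; exact nomatch hx
    · rw [h] at hx
      by_cases him : i = mB r k
      · rw [him, fB_some_self] at hx; exact nomatch hx
      · rw [fB_some τ _ him] at hx
        exact hτ.1 i (Option.some.inj hx)
  · intro x y hx hy hxy hcyc
    obtain ⟨i, hi, rfl⟩ := marked_classify ha hx
    obtain ⟨j, hj, rfl⟩ := marked_classify ha hy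
    rw [sameCycle_σB] at hcyc
    exact hτ.2 i j hi hj (fun h => hxy (by rw [h])) hcyc

lemma memB_to {a : Fin (k+r+2)} (ha : r + 1 ≤ (a:ℕ)) {τ : Perm (Fin (k+r+1))}
    (hne : τ (mB r k) ≠ mB r k) (hσ : Cond (k+r+2) (r+1) (σB r k a τ)) :
    Cond (k+r+1) (r+1) τ := by
  constructor
  · intro i hfix
    by_cases him : i = mB r k
    · exact hne (him ▸ hfix)
    · refine hσ.1 (a.succAbove i) ?_
      rw [σB_fixed_iff, finSuccEquiv'_succAbove, fB_some τ _ him, hfix]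
  · intro i j hi hj hij hcyc
    have hvi : ((a.succAbove i : Fin (k+r+2)) : ℕ) < r + 1 :=
      (val_succAbove_lt_iff a i (r+1) ha).2 hi
    have hvj : ((a.succAbove j : Fin (k+r+2)) : ℕ) < r + 1 :=
      (val_succAbove_lt_iff a j (r+1) ha).2 hj
    exact hσ.2 _ _ hvi hvj (fun h => hij (Fin.succAbove_right_injective h))
      ((sameCycle_σB a τ i j).2 hcyc)

lemma memC_of {a : Fin (k+r+2)} (ha : r + 1 ≤ (a:ℕ)) {τ' : Perm (Fin (k+r))}
    (hτ' : Cond (k+r) r τ') : Cond (k+r+2) (r+1) (σC r k a τ') := by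
  constructor
  · intro x hx
    rw [σC_fixed_iff] at hx
    rcases h : eE r k a x with _ | w
    · rw [h, fC_none] at hx; exact nomatch hx
    · rcases w with _ | i
      · rw [h, fC_some_none] at hx; exact nomatch hx
      · rw [h, fC_ss] at hx
        exact hτ'.1 i (Option.some.inj (Option.some.inj hx))
  · intro x y hx hy hxy hcyc
    rcases marked_classify_C ha hx with rfl | ⟨i, hi, rfl⟩
    · rcases marked_classify_C ha hy with rfl | ⟨j, hj, rfl⟩
      · exact hxy rfl
      · exact not_sameCycle_σC ha τ' j hcyc
    · rcases marked_classify_C ha hy with rfl | ⟨j, hj, rfl⟩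
      · exact not_sameCycle_σC ha τ' i hcyc.symm
      · rw [sameCycle_σC] at hcyc
        exact hτ'.2 i j hi hj
          (fun h => hxy (by rw [h])) hcyc

lemma memC_to {a : Fin (k+r+2)} (ha : r + 1 ≤ (a:ℕ)) {τ' : Perm (Fin (k+r))}
    (hσ : Cond (k+r+2) (r+1) (σC r k a τ')) : Cond (k+r) r τ' := by
  have hmB : ((mB r k : Fin (k+r+1)) : ℕ) = r := rfl
  have hval : ∀ i : Fin (k+r), (i:ℕ) < r →
      ((a.succAbove ((mB r k).succAbove i) : Fin (k+r+2)) : ℕ) < r + 1 := by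
    intro i hi
    have h1 : (((mB r k).succAbove i : Fin (k+r+1)) : ℕ) < r :=
      (val_succAbove_lt_iff (mB r k) i r (le_of_eq hmB.symm)).2 hi
    exact (val_succAbove_lt_iff a _ (r+1) ha).2 (by omega)
  constructor
  · intro i hfix
    refine hσ.1 (a.succAbove ((mB r k).succAbove i)) ?_
    rw [σC_fixed_iff, eE_apply_ss, fC_ss, hfix]
  · intro i j hi hj hij hcyc
    exact hσ.2 _ _ (hval i hi) (hval j hj)
      (fun h => hij (Fin.succAbove_right_injective (Fin.succAbove_right_injective h)))
      ((sameCycle_σC a τ' i j).2 hcyc)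

end Membership

section Bijection

variable (r k : ℕ)

/-- non-marked elements -/
abbrev NM (r k : ℕ) : Type := {a : Fin (k+r+2) // r + 1 ≤ (a:ℕ)}

/-- the master bijection -/
def Ψ : NM r k × (condSet (k+r+1) (r+1) ⊕ condSet (k+r) r) → condSet (k+r+2) (r+1)
  | ⟨a, Sum.inl τ⟩ => ⟨σB r k a.1 τ.1, memB_of a.2 τ.2⟩
  | ⟨a, Sum.inr τ'⟩ => ⟨σC r k a.1 τ'.1, memC_of a.2 τ'.2⟩

variable {r k}

lemma σB_at_mA {a : Fin (k+r+2)} (ha : r + 1 ≤ (a:ℕ)) (τ : Perm (Fin (k+r+1))) :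
    σB r k a τ (mA r k) = a := by
  rw [σB_apply, ← succAbove_mB ha, finSuccEquiv'_succAbove, fB_some_self,
    finSuccEquiv'_symm_none]

lemma σC_at_mA {a : Fin (k+r+2)} (ha : r + 1 ≤ (a:ℕ)) (τ' : Perm (Fin (k+r))) :
    σC r k a τ' (mA r k) = a := by
  rw [σC_apply, eE_apply_mA ha, fC_some_none, eE_symm_none]

lemma σB_at_a {a : Fin (k+r+2)} (ha : r + 1 ≤ (a:ℕ)) {τ : Perm (Fin (k+r+1))}
    (hne : τ (mB r k) ≠ mB r k) : σB r k a τ a ≠ mA r k := by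
  rw [σB_apply, finSuccEquiv'_self, fB_none, finSuccEquiv'_symm_some]
  intro h
  exact hne (Fin.succAbove_right_injective (h.trans (succAbove_mB ha).symm))

lemma σC_at_a {a : Fin (k+r+2)} (ha : r + 1 ≤ (a:ℕ)) (τ' : Perm (Fin (k+r))) :
    σC r k a τ' a = mA r k := by
  rw [σC_apply, eE_apply_self, fC_none, eE_symm_some_none, succAbove_mB ha]

lemma fB_inj {β : Type*} [DecidableEq β] {τ₁ τ₂ : Perm β} {b0 : β}
    (h : fB τ₁ b0 = fB τ₂ b0) : τ₁ = τ₂ := by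
  apply Equiv.ext
  intro i
  by_cases hib : i = b0
  · subst hib
    have := congrFun (congrArg (fun (e : Perm (Option β)) => e.toFun) h) none
    simpa [fB_none] using this
  · have := congrFun (congrArg (fun (e : Perm (Option β)) => e.toFun) h) (some i)
    simp only [Equiv.toFun_as_coe] at this
    rw [fB_some τ₁ b0 hib, fB_some τ₂ b0 hib] at this
    exact Option.some.inj this

lemma fC_inj {β : Type*} [DecidableEq β] {τ₁ τ₂ : Perm β}
    (h : fC τ₁ = fC τ₂) : τ₁ = τ₂ := by
  apply Equiv.ext
  intro i
  have := congrFun (congrArg (fun (e : Perm (Option (Option β))) => e.toFun) h) (some (some i))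
  simp only [Equiv.toFun_as_coe] at this
  rw [fC_ss, fC_ss] at this
  exact Option.some.inj (Option.some.inj this)

lemma Ψ_inj : Function.Injective (Ψ r k) := by
  rintro ⟨⟨a₁, ha₁⟩, s₁⟩ ⟨⟨a₂, ha₂⟩, s₂⟩ h
  have hσ : (Ψ r k (⟨⟨a₁, ha₁⟩, s₁⟩)).1 = (Ψ r k (⟨⟨a₂, ha₂⟩, s₂⟩)).1 := congrArg Subtype.val h
  have hval₁ : (Ψ r k (⟨⟨a₁, ha₁⟩, s₁⟩)).1 (mA r k) = a₁ := by
    rcases s₁ with τ | τ'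
    · exact σB_at_mA ha₁ τ.1
    · exact σC_at_mA ha₁ τ'.1
  have hval₂ : (Ψ r k (⟨⟨a₂, ha₂⟩, s₂⟩)).1 (mA r k) = a₂ := by
    rcases s₂ with τ | τ'
    · exact σB_at_mA ha₂ τ.1
    · exact σC_at_mA ha₂ τ'.1
  have haa : a₁ = a₂ := by rw [← hval₁, ← hval₂, hσ]
  subst haa
  rcases s₁ with τ₁ | τ₁ <;> rcases s₂ with τ₂ | τ₂
  · have : σB r k a₁ τ₁.1 = σB r k a₁ τ₂.1 := hσ
    have hf : fB τ₁.1 (mB r k) = fB τ₂.1 (mB r k) :=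
      (Equiv.permCongr ((finSuccEquiv' a₁).symm)).injective this
    have : τ₁.1 = τ₂.1 := fB_inj hf
    simp only [Prod.mk.injEq, Sum.inl.injEq, Subtype.mk.injEq]
    exact ⟨trivial, Subtype.ext this⟩
  · exfalso
    apply σB_at_a ha₁ (fun hcon => τ₁.2.1 _ hcon)
    show (Ψ r k (⟨⟨a₁, ha₁⟩, Sum.inl τ₁⟩)).1 a₁ = mA r k
    rw [hσ]
    exact σC_at_a ha₂ τ₂.1
  · exfalso
    apply σB_at_a ha₂ (fun hcon => τ₂.2.1 _ hcon)
    show (Ψ r k (⟨⟨a₁, ha₂⟩, Sum.inl τ₂⟩)).1 a₁ = mA r k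
    rw [← hσ]
    exact σC_at_a ha₁ τ₁.1
  · have : σC r k a₁ τ₁.1 = σC r k a₁ τ₂.1 := hσ
    have hf : fC τ₁.1 = fC τ₂.1 :=
      (Equiv.permCongr ((eE r k a₁).symm)).injective this
    have : τ₁.1 = τ₂.1 := fC_inj hf
    simp only [Prod.mk.injEq, Sum.inr.injEq, Subtype.mk.injEq]
    exact ⟨trivial, Subtype.ext this⟩

lemma Ψ_surj : Function.Surjective (Ψ r k) := by
  rintro ⟨σ, hσ⟩
  set a := σ (mA r k) with ha_def
  have hmA_ne : σ (mA r k) ≠ mA r k := hσ.1 _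
  have hmA_val : ((mA r k : Fin (k+r+2)) : ℕ) = r := rfl
  have ha : r + 1 ≤ (a:ℕ) := by
    by_contra hcon
    push_neg at hcon
    exact hσ.2 (mA r k) a (by omega) hcon (Ne.symm hmA_ne) ⟨1, by simp [ha_def]⟩
  by_cases hc : σ a = mA r k
  · -- case C
    set E := eE r k a with hE_def
    set F := E.permCongr σ with hF_def
    have hF_apply : ∀ y, F y = E (σ (E.symm y)) := fun y => by
      simp [hF_def, Equiv.permCongr_apply]
    have hF_sn : F (some none) = none := by
      rw [hF_apply, eE_symm_some_none, succAbove_mB ha, ← ha_def, eE_apply_self]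
    have hF_none : F none = some none := by
      rw [hF_apply, eE_symm_none, hc, eE_apply_mA ha]
    set G := Equiv.removeNone F with hG_def
    have hG_none : G none = none := by
      have h := Equiv.removeNone_none F hF_sn
      rw [hF_none] at h
      exact Option.some.inj h
    have hF_ss : ∀ i : Fin (k+r), ∃ z, F (some (some i)) = some (some z) := by
      intro i
      have hne1 : F (some (some i)) ≠ none := by
        rw [← hF_sn]
        exact fun hcon => by simpa using F.injective hcon
      have hne2 : F (some (some i)) ≠ some none := by
        rw [← hF_none]
        exact fun hcon => by simpa using F.injective hcon
      rcases hw : F (some (some i)) with _ | (_ | z)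
      · exact absurd hw hne1
      · exact absurd hw hne2
      · exact ⟨z, rfl⟩
    set τ' := Equiv.removeNone G with hτ'_def
    have hGs : ∀ i : Fin (k+r), some (G (some i)) = F (some (some i)) := by
      intro i
      obtain ⟨z, hz⟩ := hF_ss i
      exact Equiv.removeNone_some F ⟨some z, hz⟩
    have hτ's : ∀ i : Fin (k+r), some (τ' i) = G (some i) := by
      intro i
      obtain ⟨z, hz⟩ := hF_ss i
      have : G (some i) = some z := Option.some.inj (by rw [hGs i, hz])
      exact Equiv.removeNone_some G ⟨z, this⟩
    have hfC : fC τ' = F := by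
      apply Equiv.ext
      rintro (_ | (_ | i))
      · rw [fC_none, hF_none]
      · rw [fC_some_none, hF_sn]
      · rw [fC_ss, ← hGs i, ← hτ's i]
    have hσ_eq : σC r k a τ' = σ := by
      rw [σC, hfC, hF_def]
      apply Equiv.ext
      intro x
      simp [Equiv.permCongr_apply, hE_def]
    refine ⟨⟨⟨a, ha⟩, Sum.inr ⟨τ', memC_to ha (hσ_eq.symm ▸ hσ)⟩⟩, ?_⟩
    exact Subtype.ext hσ_eq
  · -- case B
    set e := finSuccEquiv' a with he_def
    set F := e.permCongr σ with hF_def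
    have hF_apply : ∀ y, F y = e (σ (e.symm y)) := fun y => by
      simp [hF_def, Equiv.permCongr_apply]
    have hF_mB : F (some (mB r k)) = none := by
      rw [hF_apply, finSuccEquiv'_symm_some, succAbove_mB ha, ← ha_def, finSuccEquiv'_self]
    have hF_none : F none = e (σ a) := by rw [hF_apply, finSuccEquiv'_symm_none]
    set τ := Equiv.removeNone F with hτ_def
    have hτ_mB : some (τ (mB r k)) = F none := Equiv.removeNone_none F hF_mB
    have hfB : fB τ (mB r k) = F := by
      apply Equiv.ext
      rintro (_ | i)
      · rw [fB_none, hτ_mB]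
      · by_cases him : i = mB r k
        · rw [him, fB_some_self, hF_mB]
        · have hne_none : F (some i) ≠ none := by
            rw [← hF_mB]
            exact fun hcon => him (by simpa using F.injective hcon)
          rcases hz : F (some i) with _ | z
          · exact absurd hz hne_none
          · rw [fB_some τ _ him, ← hz]
            exact Equiv.removeNone_some F ⟨z, hz⟩
    have hσ_eq : σB r k a τ = σ := by
      rw [σB, hfB, hF_def]
      apply Equiv.ext
      intro x
      simp [Equiv.permCongr_apply, he_def]
    have hne : τ (mB r k) ≠ mB r k := by
      intro hcon
      apply hc
      have h1 : e (σ a) = some (mB r k) := by rw [← hF_none, ← hτ_mB, hcon]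
      have h2 := congrArg e.symm h1
      rw [Equiv.symm_apply_apply, he_def, finSuccEquiv'_symm_some, succAbove_mB ha] at h2
      exact h2
    refine ⟨⟨⟨a, ha⟩, Sum.inl ⟨τ, memB_to ha hne (hσ_eq.symm ▸ hσ)⟩⟩, ?_⟩
    exact Subtype.ext hσ_eq

/-- counting the non-marked elements -/
def nmEquiv (r k : ℕ) : NM r k ≃ Fin (k+1) where
  toFun a := ⟨(a.1:ℕ) - (r+1), by have h2 := a.1.2; have h3 := a.2; omega⟩
  invFun i := ⟨⟨(i:ℕ) + (r+1), by have := i.2; omega⟩, by simp⟩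
  left_inv a := Subtype.ext (Fin.ext (by have h2 := a.1.2; have h3 := a.2; simp; omega))
  right_inv i := Fin.ext (by simp)

theorem card_step (r k : ℕ) :
    Nat.card (condSet (k+r+2) (r+1)) =
      (k+1) * (Nat.card (condSet (k+r+1) (r+1)) + Nat.card (condSet (k+r) r)) := by
  have hbij : Function.Bijective (Ψ r k) := ⟨Ψ_inj, Ψ_surj⟩
  rw [← Nat.card_congr (Equiv.ofBijective _ hbij), Nat.card_prod, Nat.card_sum]
  congr 1
  rw [Nat.card_congr (nmEquiv r k)]
  simp

end Bijection

end RDerAux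

open Nat Finset PowerSeries

/-- `rDerangements r k` is the number of permutations of `[k+r]` with no fixed
point in which the first `r` elements lie in pairwise distinct cycles. -/
noncomputable def rDerangements (r k : ℕ) : ℕ :=
  Nat.card {σ : Equiv.Perm (Fin (k + r)) //
    (∀ i, σ i ≠ i) ∧
      ∀ i j : Fin (k + r), (i : ℕ) < r → (j : ℕ) < r → i ≠ j → ¬ σ.SameCycle i j}

namespace RDerAux

lemma rDerangements_eq_card (r k : ℕ) :
    rDerangements r k = Nat.card (condSet (k+r) r) := rfl

lemma rder_key (r k : ℕ) :
    rDerangements (r+1) (k+1) = (k+1) * (rDerangements (r+1) k + rDerangements r k) := by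
  rw [rDerangements_eq_card, rDerangements_eq_card, rDerangements_eq_card]
  rw [condSet_card_cast (r+1) (show (k+1)+(r+1) = k+r+2 by omega)]
  rw [condSet_card_cast (r+1) (show k+(r+1) = k+r+1 by omega)]
  exact card_step r k

lemma rder_zero (r : ℕ) : rDerangements (r+1) 0 = 0 := by
  rw [rDerangements_eq_card]
  have : IsEmpty (condSet (0+(r+1)) (r+1)) := by
    constructor
    rintro ⟨σ, h1, h2⟩
    have hi0 : ((⟨0, by omega⟩ : Fin (0+(r+1))) : ℕ) < r + 1 := by simp
    have hσi : ((σ ⟨0, by omega⟩ : Fin (0+(r+1))) : ℕ) < r + 1 := by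
      have := (σ (⟨0, by omega⟩ : Fin (0+(r+1)))).2
      omega
    exact h2 _ _ hi0 hσi (Ne.symm (h1 _)) ⟨1, by simp⟩
  exact Nat.card_of_isEmpty

lemma rder_zero_left (k : ℕ) : rDerangements 0 k = numDerangements k := by
  rw [rDerangements_eq_card]
  have e : condSet (k+0) 0 ≃ derangements (Fin (k+0)) :=
    Equiv.subtypeEquivRight (fun σ => by
      constructor
      · exact fun h => h.1
      · exact fun h => ⟨h, fun i j hi => absurd hi (by omega)⟩)
  rw [Nat.card_congr e, Nat.card_eq_fintype_card,
    card_derangements_fin_eq_numDerangements]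
  norm_num

end RDerAux

namespace RDerSeries

open RDerAux

lemma constCoeff_one_sub_X : constantCoeff (1 - X : ℚ⟦X⟧) = 1 := by
  simp

lemma one_sub_X_ne : (1 - X : ℚ⟦X⟧) ≠ 0 := by
  intro h
  have := constCoeff_one_sub_X
  rw [h, map_zero] at this
  exact zero_ne_one this

lemma pow_one_sub_X_cc (m : ℕ) : constantCoeff ((1 - X : ℚ⟦X⟧) ^ m) ≠ 0 := by
  rw [map_pow, constCoeff_one_sub_X, one_pow]
  exact one_ne_zero

lemma inv_cancel (m : ℕ) : ((1 - X : ℚ⟦X⟧) ^ m)⁻¹ * (1 - X) ^ m = 1 :=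
  PowerSeries.inv_mul_cancel _ (pow_one_sub_X_cc m)

lemma inv_step (r : ℕ) :
    (1 - X : ℚ⟦X⟧) * ((1 - X) ^ (r+2))⁻¹ = ((1 - X) ^ (r+1))⁻¹ := by
  have hne : ((1 - X : ℚ⟦X⟧) ^ (r+1)) ≠ 0 := pow_ne_zero _ one_sub_X_ne
  apply mul_right_cancel₀ hne
  rw [inv_cancel]
  calc (1 - X : ℚ⟦X⟧) * ((1 - X) ^ (r+2))⁻¹ * (1 - X) ^ (r+1)
      = ((1 - X) ^ (r+2))⁻¹ * (1 - X) ^ (r+2) := by ring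
    _ = 1 := inv_cancel _

lemma base_mul :
    PowerSeries.mk (fun k => (rDerangements 0 k : ℚ) / (k ! : ℚ)) * (1 - X) =
      rescale (-1 : ℚ) (exp ℚ) := by
  ext n
  rw [mul_sub, mul_one, map_sub, coeff_mk, coeff_rescale, coeff_exp]
  cases n with
  | zero =>
    simp [rder_zero_left, numDerangements_zero, mul_comm]
  | succ n =>
    rw [mul_comm _ X, coeff_succ_X_mul, coeff_mk]
    simp only [rder_zero_left]
    have h := numDerangements_succ n
    have hq : ((numDerangements (n+1) : ℚ)) = (n+1) * (numDerangements n : ℚ) - (-1)^n := by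
      exact_mod_cast h
    rw [hq, Nat.factorial_succ]
    have hfac : ((n ! : ℚ)) ≠ 0 := by exact_mod_cast Nat.factorial_ne_zero n
    have hfac1 : ((n+1 : ℚ)) ≠ 0 := by positivity
    simp only [Algebra.algebraMap_self, RingHom.id_apply]
    push_cast
    field_simp
    ring

lemma rec_mul (r : ℕ) :
    (1 - X : ℚ⟦X⟧) * PowerSeries.mk (fun k => (rDerangements (r+1) k : ℚ) / (k ! : ℚ)) =
      X * PowerSeries.mk (fun k => (rDerangements r k : ℚ) / (k ! : ℚ)) := by
  ext n
  rw [sub_mul, one_mul, map_sub]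
  cases n with
  | zero =>
    rw [coeff_zero_X_mul, coeff_zero_X_mul, coeff_mk]
    simp [rder_zero]
  | succ n =>
    rw [coeff_succ_X_mul, coeff_succ_X_mul, coeff_mk, coeff_mk, coeff_mk]
    rw [rder_key r n, Nat.factorial_succ]
    have hfac : ((n ! : ℚ)) ≠ 0 := by exact_mod_cast Nat.factorial_ne_zero n
    have hfac1 : ((n+1 : ℚ)) ≠ 0 := by positivity
    push_cast
    field_simp
    ring

end RDerSeries

/-- The exponential generating function of the `r`-derangement numbers:
`∑_{k≥0} d_{k,r} t^k / k! = t^r e^{-t} / (1-t)^{r+1}`, as formal power series over `ℚ`. -/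
theorem stmt_1 (r : ℕ) :
    PowerSeries.mk (fun k => (rDerangements r k : ℚ) / (k ! : ℚ)) =
      X ^ r * rescale (-1 : ℚ) (exp ℚ) * ((1 - X) ^ (r + 1))⁻¹ := by
  induction r with
  | zero =>
    rw [pow_zero, one_mul, pow_one, ← RDerSeries.base_mul, mul_assoc,
      PowerSeries.mul_inv_cancel _
        (by rw [RDerSeries.constCoeff_one_sub_X]; exact one_ne_zero), mul_one]
  | succ r ih =>
    have h1 := RDerSeries.rec_mul r
    rw [ih] at h1
    have h2 : (1 - X : ℚ⟦X⟧) *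
        (X ^ (r+1) * rescale (-1 : ℚ) (exp ℚ) * ((1 - X) ^ (r+2))⁻¹) =
        X * (X ^ r * rescale (-1 : ℚ) (exp ℚ) * ((1 - X) ^ (r+1))⁻¹) := by
      calc (1 - X : ℚ⟦X⟧) * (X ^ (r+1) * rescale (-1 : ℚ) (exp ℚ) * ((1 - X) ^ (r+2))⁻¹)
          = X ^ (r+1) * rescale (-1 : ℚ) (exp ℚ) * ((1 - X) * ((1 - X) ^ (r+2))⁻¹) := by
            ring
        _ = X ^ (r+1) * rescale (-1 : ℚ) (exp ℚ) * ((1 - X) ^ (r+1))⁻¹ := by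
            rw [RDerSeries.inv_step]
        _ = X * (X ^ r * rescale (-1 : ℚ) (exp ℚ) * ((1 - X) ^ (r+1))⁻¹) := by
            ring
    rw [← h2] at h1
    exact mul_left_cancel₀ RDerSeries.one_sub_X_ne h1
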